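/- arXiv:1302.5804 — 3 statements merged into one kernel-verified Lean document; each statement's English description precedes it below -/
import Mathlib

section
/- Let D : ℝ → ℝ be Lipschitz with constant L, W ∈ L^∞([0,1]²), and define K on C([0,τ]; L^∞([0,1])) by (Ku)(x,t) = g(x) + ∫_0^t ∫_0^1 W(x,y) D(u(y,s) − u(x,s)) dy ds for g ∈ L^∞([0,1]). If τ ≤ (4 L ‖W‖_{L^∞})^{-1}, then K is a contraction with constant 1/2 on the set of u ∈ C([0,τ]; L^∞([0,1])) with u(·,0) = g, with respect to the sup-in-time L^∞ norm. -/
open MeasureTheory Set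

/-- The Picard operator `(Ku)(x,t) = g(x) + ∫_0^t ∫_0^1 W(x,y) D(u(y,s) − u(x,s)) dy ds`
is a contraction with constant `1/2` on `{u ∈ C([0,τ]; L^∞) : u(0) = g}` provided
`τ ≤ (4 L ‖W‖_{L^∞})⁻¹`, in the norm `max_{t∈[0,τ]} ‖u(t) − v(t)‖_{L^∞([0,1])}`. -/
theorem picard_operator_contraction
    (D : ℝ → ℝ) (L : ℝ) (hL : 0 < L) (hD : ∀ a b : ℝ, |D a - D b| ≤ L * |a - b|)
    (W : ℝ → ℝ → ℝ)
    (hWmem : MemLp (fun p : ℝ × ℝ => W p.1 p.2) ⊤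
      (volume.restrict (Icc 0 1 ×ˢ Icc 0 1)))
    (g : ℝ → ℝ) (hg : MemLp g ⊤ (volume.restrict (Icc (0:ℝ) 1)))
    (τ : ℝ) (hτpos : 0 < τ)
    (hτ : τ ≤ (4 * L * (eLpNorm (fun p : ℝ × ℝ => W p.1 p.2) ⊤
      (volume.restrict (Icc 0 1 ×ˢ Icc 0 1))).toReal)⁻¹)
    (u v : ℝ → ℝ → ℝ)
    (hu0 : ∀ x, u 0 x = g x) (hv0 : ∀ x, v 0 x = g x)
    (humeas : Measurable (Function.uncurry u)) (hvmeas : Measurable (Function.uncurry v))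
    (hubd : ∃ M, ∀ t ∈ Icc 0 τ, ∀ x, |u t x| ≤ M)
    (hvbd : ∃ M, ∀ t ∈ Icc 0 τ, ∀ x, |v t x| ≤ M)
    (hucont : ∀ x, ContinuousOn (fun t => u t x) (Icc 0 τ))
    (hvcont : ∀ x, ContinuousOn (fun t => v t x) (Icc 0 τ)) :
    (⨆ t : Icc 0 τ, eLpNorm (fun x =>
        (g x + ∫ s in (0:ℝ)..(t:ℝ), ∫ y in (0:ℝ)..1, W x y * D (u s y - u s x)) -
        (g x + ∫ s in (0:ℝ)..(t:ℝ), ∫ y in (0:ℝ)..1, W x y * D (v s y - v s x))) ⊤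
        (volume.restrict (Icc (0:ℝ) 1)))
      ≤ (1/2 : ENNReal) *
        ⨆ t : Icc 0 τ, eLpNorm (fun x => u (t:ℝ) x - v (t:ℝ) x) ⊤
          (volume.restrict (Icc (0:ℝ) 1)) := by
  classical
  set μ1 : Measure ℝ := volume.restrict (Icc (0:ℝ) 1) with hμ1
  set μ2 : Measure (ℝ × ℝ) := volume.restrict (Icc 0 1 ×ˢ Icc 0 1) with hμ2
  set C : ℝ := (eLpNorm (fun p : ℝ × ℝ => W p.1 p.2) ⊤ μ2).toReal with hC
  set M : ENNReal :=
    ⨆ t : Icc 0 τ, eLpNorm (fun x => u (t:ℝ) x - v (t:ℝ) x) ⊤ μ1 with hM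
  -- basic positivity
  have hCpos : 0 < C := by
    have h1 : 0 < (4 * L * C)⁻¹ := lt_of_lt_of_le hτpos hτ
    have h2 : 0 < 4 * L * C := inv_pos.mp h1
    nlinarith
  -- Lipschitz continuity of D
  have hDlip : LipschitzWith L.toNNReal D := by
    apply LipschitzWith.of_dist_le_mul
    intro a b
    rw [Real.dist_eq, Real.dist_eq]
    simpa [Real.coe_toNNReal L hL.le] using hD a b
  have hDcont : Continuous D := hDlip.continuous
  have hDabs : ∀ a : ℝ, |D a| ≤ |D 0| + L * |a| := by
    intro a
    have h1 := hD a 0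
    rw [sub_zero] at h1
    calc |D a| = |(D a - D 0) + D 0| := by ring_nf
      _ ≤ |D a - D 0| + |D 0| := abs_add_le _ _
      _ ≤ |D 0| + L * |a| := by linarith
  obtain ⟨Mu, hMu⟩ := hubd
  obtain ⟨Mv, hMv⟩ := hvbd
  -- M is finite
  have hMle : M ≤ ENNReal.ofReal (Mu + Mv) := by
    apply iSup_le
    rintro ⟨t, ht⟩
    rw [eLpNorm_exponent_top]
    apply eLpNormEssSup_le_of_ae_bound (C := Mu + Mv)
    apply ae_of_all
    intro x
    have h1 := hMu t ht x
    have h2 := hMv t ht x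
    simp only [Real.norm_eq_abs]
    calc |u t x - v t x| ≤ |u t x| + |v t x| := abs_sub _ _
      _ ≤ Mu + Mv := by linarith
  have hMne : M ≠ ⊤ := ne_top_of_le_ne_top ENNReal.ofReal_ne_top hMle
  set Mr : ℝ := M.toReal with hMr
  have hMrnn : 0 ≤ Mr := ENNReal.toReal_nonneg
  -- per-time essential sup bound
  have hsle : ∀ s ∈ Icc 0 τ, eLpNorm (fun x => u s x - v s x) ⊤ μ1 ≤ M := by
    intro s hs
    exact le_iSup (fun t : Icc 0 τ => eLpNorm (fun x => u (t:ℝ) x - v (t:ℝ) x) ⊤ μ1) ⟨s, hs⟩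
  have hsae : ∀ s ∈ Icc 0 τ, ∀ᵐ y ∂μ1, |u s y - v s y| ≤ Mr := by
    intro s hs
    filter_upwards [ae_le_eLpNormEssSup (f := fun x => u s x - v s x) (μ := μ1)] with y hy
    have h2 : (‖u s y - v s y‖₊ : ENNReal) ≤ M := by
      refine hy.trans ?_
      rw [← eLpNorm_exponent_top]; exact hsle s hs
    have := ENNReal.toReal_mono hMne h2
    simpa [Real.norm_eq_abs] using this
  -- measurable version of W
  set W' : ℝ × ℝ → ℝ := hWmem.1.mk _ with hW'
  have hW'sm : StronglyMeasurable W' := hWmem.1.stronglyMeasurable_mk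
  have hWeq : (fun p : ℝ × ℝ => W p.1 p.2) =ᵐ[μ2] W' := hWmem.1.ae_eq_mk
  have hWbd : ∀ᵐ p ∂μ2, |W p.1 p.2| ≤ C := by
    filter_upwards [ae_le_eLpNormEssSup (f := fun p : ℝ × ℝ => W p.1 p.2) (μ := μ2)] with p hp
    have hne : eLpNorm (fun p : ℝ × ℝ => W p.1 p.2) ⊤ μ2 ≠ ⊤ := hWmem.2.ne
    have h2 : (‖W p.1 p.2‖₊ : ENNReal) ≤ eLpNorm (fun p : ℝ × ℝ => W p.1 p.2) ⊤ μ2 := by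
      rw [eLpNorm_exponent_top]; exact hp
    have := ENNReal.toReal_mono hne h2
    simpa [Real.norm_eq_abs, hC] using this
  have hμ2prod : μ2 = μ1.prod μ1 := by
    rw [hμ1, hμ2, Measure.prod_restrict, ← Measure.volume_eq_prod]
  have hWae : ∀ᵐ x ∂μ1, ∀ᵐ y ∂μ1, W x y = W' (x, y) ∧ |W' (x, y)| ≤ C := by
    apply Measure.ae_ae_of_ae_prod (p := fun q : ℝ × ℝ => W q.1 q.2 = W' q ∧ |W' q| ≤ C)
    rw [← hμ2prod]
    filter_upwards [hWeq, hWbd] with p h1 h2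
    exact ⟨h1, h1 ▸ h2⟩
  -- the countable family of rational-time bounds
  have hQ : ∀ᵐ x ∂μ1, ∀ q : ℚ, (q : ℝ) ∈ Icc 0 τ → |u q x - v q x| ≤ Mr := by
    rw [ae_all_iff]
    intro q
    by_cases hq : (q : ℝ) ∈ Icc 0 τ
    · filter_upwards [hsae q hq] with x hx using fun _ => hx
    · exact ae_of_all _ fun x h => absurd h hq
  -- section measurability of W'
  have hW'sect : ∀ x : ℝ, Measurable fun y => W' (x, y) := fun x =>
    hW'sm.measurable.comp measurable_prodMk_left
  -- main pointwise (a.e. x) estimate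
  have key : ∀ t ∈ Icc 0 τ, ∀ᵐ x ∂μ1,
      ‖(g x + ∫ s in (0:ℝ)..t, ∫ y in (0:ℝ)..1, W x y * D (u s y - u s x)) -
        (g x + ∫ s in (0:ℝ)..t, ∫ y in (0:ℝ)..1, W x y * D (v s y - v s x))‖ ≤ Mr / 2 := by
    intro t ht
    filter_upwards [hWae, hQ] with x hWx hQx
    -- uniform-in-time bound at this x
    have hx_unif : ∀ s ∈ Icc 0 τ, |u s x - v s x| ≤ Mr := by
      have hcont : ContinuousOn (fun s => |u s x - v s x|) (Icc 0 τ) :=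
        ((hucont x).sub (hvcont x)).abs
      have hclosed : IsClosed (Icc 0 τ ∩ (fun s => |u s x - v s x|) ⁻¹' Iic Mr) :=
        hcont.preimage_isClosed_of_isClosed isClosed_Icc isClosed_Iic
      have hsubset : Icc 0 τ ⊆ Icc 0 τ ∩ (fun s => |u s x - v s x|) ⁻¹' Iic Mr := by
        have hdense : Icc 0 τ ⊆ closure (Ioo 0 τ ∩ (range ((↑) : ℚ → ℝ))) := by
          rw [← closure_Ioo hτpos.ne]
          exact closure_minimal
            (Rat.denseRange_cast.open_subset_closure_inter isOpen_Ioo) isClosed_closure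
        intro s hs
        have hmem : s ∈ closure (Ioo 0 τ ∩ (range ((↑) : ℚ → ℝ))) := hdense hs
        have hsub : Ioo 0 τ ∩ (range ((↑) : ℚ → ℝ)) ⊆
            Icc 0 τ ∩ (fun s => |u s x - v s x|) ⁻¹' Iic Mr := by
          rintro r ⟨hr, ⟨q, rfl⟩⟩
          have hr' : (q : ℝ) ∈ Icc 0 τ := Ioo_subset_Icc_self hr
          exact ⟨hr', hQx q hr'⟩
        exact hclosed.closure_subset ((closure_mono hsub) hmem)
      exact fun s hs => (hsubset hs).2
    have hWx1 : ∀ᵐ y ∂μ1, W x y = W' (x, y) := by filter_upwards [hWx] with y hy using hy.1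
    have hWx2 : ∀ᵐ y ∂μ1, |W x y| ≤ C := by
      filter_upwards [hWx] with y hy
      rw [hy.1]; exact hy.2
    have hWxIoc : ∀ᵐ y ∂(volume.restrict (Ioc (0:ℝ) 1)), W x y = W' (x, y) :=
      ae_restrict_of_ae_restrict_of_subset Ioc_subset_Icc_self hWx1
    have hWxIoc2 : ∀ᵐ y ∂(volume.restrict (Ioc (0:ℝ) 1)), |W x y| ≤ C :=
      ae_restrict_of_ae_restrict_of_subset Ioc_subset_Icc_self hWx2
    -- a.e. pointwise bound on the inner integrand
    have haebd : ∀ (w : ℝ → ℝ → ℝ) (Mw : ℝ),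
        (∀ t' ∈ Icc 0 τ, ∀ x', |w t' x'| ≤ Mw) →
        ∀ s ∈ Icc 0 τ, ∀ᵐ y ∂(volume.restrict (Ioc (0:ℝ) 1)),
          ‖W x y * D (w s y - w s x)‖ ≤ C * (|D 0| + L * (2 * Mw)) := by
      intro w Mw hwbd s hs
      filter_upwards [hWxIoc2] with y hy
      have hwb : |w s y - w s x| ≤ 2 * Mw := by
        have h1 := hwbd s hs y
        have h2 := hwbd s hs x
        calc |w s y - w s x| ≤ |w s y| + |w s x| := abs_sub _ _
          _ ≤ 2 * Mw := by linarith
      have hDb' : |D (w s y - w s x)| ≤ |D 0| + L * (2 * Mw) := by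
        refine (hDabs _).trans ?_
        have := mul_le_mul_of_nonneg_left hwb hL.le
        linarith
      rw [Real.norm_eq_abs, abs_mul]
      exact mul_le_mul hy hDb' (abs_nonneg _) hCpos.le
    -- measurability of the inner integrand in y (for fixed s)
    have hmeasy : ∀ (w : ℝ → ℝ → ℝ), Measurable (Function.uncurry w) → ∀ s : ℝ,
        AEStronglyMeasurable (fun y => W x y * D (w s y - w s x))
          (volume.restrict (Ioc (0:ℝ) 1)) := by
      intro w hwmeas s
      have h1 : AEStronglyMeasurable (fun y => W x y) (volume.restrict (Ioc (0:ℝ) 1)) :=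
        ⟨fun y => W' (x, y), (hW'sect x).stronglyMeasurable, hWxIoc⟩
      have h2 : Measurable fun y => D (w s y - w s x) :=
        hDcont.measurable.comp ((hwmeas.comp measurable_prodMk_left).sub measurable_const)
      exact h1.mul h2.aestronglyMeasurable
    -- y-integrability
    have hyint : ∀ (w : ℝ → ℝ → ℝ) (Mw : ℝ), Measurable (Function.uncurry w) →
        (∀ t' ∈ Icc 0 τ, ∀ x', |w t' x'| ≤ Mw) →
        ∀ s ∈ Icc 0 τ, IntervalIntegrable
          (fun y => W x y * D (w s y - w s x)) volume 0 1 := by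
      intro w Mw hwmeas hwbd s hs
      rw [intervalIntegrable_iff, uIoc_of_le (zero_le_one (α := ℝ))]
      exact Integrable.mono' (g := fun _ => C * (|D 0| + L * (2 * Mw)))
        (integrable_const _) (hmeasy w hwmeas s) (haebd w Mw hwbd s hs)
    have hyu := hyint u Mu humeas hMu
    have hyv := hyint v Mv hvmeas hMv
    -- norm bound on inner integral
    have hnorm : ∀ (w : ℝ → ℝ → ℝ) (Mw : ℝ),
        (∀ t' ∈ Icc 0 τ, ∀ x', |w t' x'| ≤ Mw) →
        ∀ s ∈ Icc 0 τ,
        ‖∫ y in (0:ℝ)..1, W x y * D (w s y - w s x)‖ ≤ C * (|D 0| + L * (2 * Mw)) := by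
      intro w Mw hwbd s hs
      have hb : ‖∫ y in (0:ℝ)..1, W x y * D (w s y - w s x)‖ ≤
          |∫ y in (0:ℝ)..1, (C * (|D 0| + L * (2 * Mw)) : ℝ)| := by
        apply intervalIntegral.norm_integral_le_abs_of_norm_le
        · rw [uIoc_of_le (zero_le_one (α := ℝ))]
          exact haebd w Mw hwbd s hs
        · exact intervalIntegrable_const
      refine hb.trans ?_
      rw [intervalIntegral.integral_const, sub_zero, one_smul]
      have h0 : (0:ℝ) ≤ C * (|D 0| + L * (2 * Mw)) := by
        have hMw0 : (0:ℝ) ≤ Mw := (abs_nonneg _).trans (hwbd s hs x)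
        have h1 : (0:ℝ) ≤ |D 0| + L * (2 * Mw) :=
          add_nonneg (abs_nonneg _) (by nlinarith)
        exact mul_nonneg hCpos.le h1
      rw [abs_of_nonneg h0]
    -- difference bound on the inner integral
    have hdiff : ∀ s ∈ Icc 0 τ,
        ‖(∫ y in (0:ℝ)..1, W x y * D (u s y - u s x)) -
          ∫ y in (0:ℝ)..1, W x y * D (v s y - v s x)‖ ≤ C * (L * (2 * Mr)) := by
      intro s hs
      rw [← intervalIntegral.integral_sub (hyu s hs) (hyv s hs)]
      have hb : ‖∫ y in (0:ℝ)..1,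
          (W x y * D (u s y - u s x) - W x y * D (v s y - v s x))‖ ≤
          |∫ y in (0:ℝ)..1, (C * (L * (2 * Mr)) : ℝ)| := by
        apply intervalIntegral.norm_integral_le_abs_of_norm_le
        · rw [uIoc_of_le (zero_le_one (α := ℝ))]
          have hsy := ae_restrict_of_ae_restrict_of_subset Ioc_subset_Icc_self (hsae s hs)
          filter_upwards [hWxIoc2, hsy] with y hWy hsy'
          rw [← mul_sub, Real.norm_eq_abs, abs_mul]
          have hDd : |D (u s y - u s x) - D (v s y - v s x)| ≤ L * (2 * Mr) := by
            refine (hD _ _).trans ?_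
            have habs : |(u s y - u s x) - (v s y - v s x)| ≤ 2 * Mr := by
              have hxs := hx_unif s hs
              calc |(u s y - u s x) - (v s y - v s x)|
                  = |(u s y - v s y) - (u s x - v s x)| := by ring_nf
                _ ≤ |u s y - v s y| + |u s x - v s x| := abs_sub _ _
                _ ≤ 2 * Mr := by linarith
            have := mul_le_mul_of_nonneg_left habs hL.le
            linarith
          exact mul_le_mul hWy hDd (abs_nonneg _) hCpos.le
        · exact intervalIntegrable_const
      refine hb.trans ?_
      rw [intervalIntegral.integral_const, sub_zero, one_smul]
      have h0 : (0:ℝ) ≤ C * (L * (2 * Mr)) := by positivity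
      rw [abs_of_nonneg h0]
    -- interval integrability in s
    have hsint : ∀ (w : ℝ → ℝ → ℝ) (Mw : ℝ), Measurable (Function.uncurry w) →
        (∀ t' ∈ Icc 0 τ, ∀ x', |w t' x'| ≤ Mw) →
        IntervalIntegrable
          (fun s => ∫ y in (0:ℝ)..1, W x y * D (w s y - w s x)) volume 0 t := by
      intro w Mw hwmeas hwbd
      have hfun : (fun s => ∫ y in (0:ℝ)..1, W x y * D (w s y - w s x)) =
          fun s => ∫ y in Ioc (0:ℝ) 1, W' (x, y) * D (w s y - w s x) := by
        funext s
        rw [intervalIntegral.integral_of_le (zero_le_one (α := ℝ))]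
        apply integral_congr_ae
        filter_upwards [hWxIoc] with y hy
        rw [hy]
      have hsm : StronglyMeasurable
          (fun s => ∫ y in Ioc (0:ℝ) 1, W' (x, y) * D (w s y - w s x)) := by
        apply StronglyMeasurable.integral_prod_right' (f := fun p : ℝ × ℝ =>
          W' (x, p.2) * D (w p.1 p.2 - w p.1 x))
        apply Measurable.stronglyMeasurable
        exact ((hW'sect x).comp measurable_snd).mul
          (hDcont.measurable.comp
            (hwmeas.sub (hwmeas.comp (measurable_fst.prodMk measurable_const))))
      rw [intervalIntegrable_iff, uIoc_of_le ht.1]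
      apply Integrable.mono' (g := fun _ => C * (|D 0| + L * (2 * Mw))) (integrable_const _)
      · rw [hfun]
        exact hsm.aestronglyMeasurable.restrict
      · rw [ae_restrict_iff' measurableSet_Ioc]
        apply ae_of_all
        intro s hsmem
        have hs' : s ∈ Icc 0 τ := ⟨hsmem.1.le, hsmem.2.trans ht.2⟩
        simpa using hnorm w Mw hwbd s hs'
    have hIu := hsint u Mu humeas hMu
    have hIv := hsint v Mv hvmeas hMv
    -- final estimate
    have heq : (g x + ∫ s in (0:ℝ)..t, ∫ y in (0:ℝ)..1, W x y * D (u s y - u s x)) -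
        (g x + ∫ s in (0:ℝ)..t, ∫ y in (0:ℝ)..1, W x y * D (v s y - v s x)) =
        ∫ s in (0:ℝ)..t, ((∫ y in (0:ℝ)..1, W x y * D (u s y - u s x)) -
          ∫ y in (0:ℝ)..1, W x y * D (v s y - v s x)) := by
      rw [intervalIntegral.integral_sub hIu hIv]; ring
    rw [heq]
    have hb : ‖∫ s in (0:ℝ)..t, ((∫ y in (0:ℝ)..1, W x y * D (u s y - u s x)) -
        ∫ y in (0:ℝ)..1, W x y * D (v s y - v s x))‖ ≤ C * (L * (2 * Mr)) * |t - 0| := by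
      apply intervalIntegral.norm_integral_le_of_norm_le_const
      intro s hsmem
      rw [uIoc_of_le ht.1] at hsmem
      exact hdiff s ⟨hsmem.1.le, hsmem.2.trans ht.2⟩
    refine hb.trans ?_
    rw [sub_zero, abs_of_nonneg ht.1]
    have hB0 : (0:ℝ) ≤ C * (L * (2 * Mr)) := by positivity
    have h1 : C * (L * (2 * Mr)) * t ≤ C * (L * (2 * Mr)) * (4 * L * C)⁻¹ :=
      mul_le_mul_of_nonneg_left (le_trans ht.2 hτ) hB0
    refine h1.trans ?_
    rw [mul_inv_le_iff₀ (by positivity)]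
    nlinarith [hMrnn, hCpos, hL]
  -- conclude
  apply iSup_le
  rintro ⟨t, ht⟩
  have h1 : eLpNorm (fun x =>
      (g x + ∫ s in (0:ℝ)..t, ∫ y in (0:ℝ)..1, W x y * D (u s y - u s x)) -
      (g x + ∫ s in (0:ℝ)..t, ∫ y in (0:ℝ)..1, W x y * D (v s y - v s x))) ⊤ μ1 ≤
      ENNReal.ofReal (Mr / 2) := by
    rw [eLpNorm_exponent_top]
    exact eLpNormEssSup_le_of_ae_bound (key t ht)
  refine h1.trans ?_
  have h2 : ENNReal.ofReal (Mr / 2) = (1/2 : ENNReal) * M := by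
    rw [ENNReal.ofReal_div_of_pos two_pos, hMr, ENNReal.ofReal_toReal hMne]
    rw [ENNReal.div_eq_inv_mul, one_div]
    norm_num
  rw [← h2]
end

section
/- Let D : ℝ → ℝ be Lipschitz, W ∈ L^∞([0,1]²), and g ∈ L^∞([0,1]). Then for every T > 0 there exists a unique continuously differentiable solution u : [−T, T] → L^∞([0,1]) of the initial value problem ∂u/∂t(x,t) = ∫_0^1 W(x,y) D(u(y,t) − u(x,t)) dy with u(x,0) = g(x). -/
open MeasureTheory Set

open Filter

namespace HeatWP

/-- The nonlocal operator `F(v)(x) = ∫_0^1 W(x,y) D(v(y) - v(x)) dy`. -/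
noncomputable def Fop (W : ℝ → ℝ → ℝ) (D : ℝ → ℝ) (v : ℝ → ℝ) (x : ℝ) : ℝ :=
  ∫ y in (0:ℝ)..1, W x y * D (v y - v x)

lemma Fop_def (W : ℝ → ℝ → ℝ) (D : ℝ → ℝ) (v : ℝ → ℝ) (x : ℝ) :
    Fop W D v x = ∫ y in (0:ℝ)..1, W x y * D (v y - v x) := rfl

/-- measurable + bounded on `Ι a b` implies interval integrable. -/
lemma intervalIntegrable_of_bounded {f : ℝ → ℝ} {C a b : ℝ}
    (hf : Measurable f) (hC : ∀ s ∈ Set.uIoc a b, |f s| ≤ C) :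
    IntervalIntegrable f volume a b := by
  rw [intervalIntegrable_iff]
  apply Measure.integrableOn_of_bounded (M := C)
  · exact (measure_Ioc_lt_top).ne
  · exact hf.aestronglyMeasurable
  · exact (ae_restrict_iff' measurableSet_uIoc).2 (ae_of_all _ fun s hs => by
      simpa [Real.norm_eq_abs] using hC s hs)

lemma D_abs_bound {D : ℝ → ℝ} {L : ℝ} (hD : ∀ a b : ℝ, |D a - D b| ≤ L * |a - b|)
    (z : ℝ) : |D z| ≤ |D 0| + L * |z| := by
  have h := hD z 0
  have : |D z| ≤ |D z - D 0| + |D 0| := by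
    have := abs_add_le (D z - D 0) (D 0); simpa using this
  simp only [sub_zero] at h
  linarith

lemma Fop_integrand_bound {D : ℝ → ℝ} {L : ℝ} (hD : ∀ a b : ℝ, |D a - D b| ≤ L * |a - b|)
    (hL : 0 ≤ L) {W : ℝ → ℝ → ℝ} {CW : ℝ} (hWbd : ∀ x y, |W x y| ≤ CW)
    {v : ℝ → ℝ} {M : ℝ} (hM : ∀ y, |v y| ≤ M) (x y : ℝ) :
    |W x y * D (v y - v x)| ≤ CW * (|D 0| + L * (2 * M)) := by
  rw [abs_mul]
  have hCW : 0 ≤ CW := (abs_nonneg _).trans (hWbd x y)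
  have h1 : |D (v y - v x)| ≤ |D 0| + L * (2 * M) := by
    have := D_abs_bound hD (v y - v x)
    have h2 : |v y - v x| ≤ 2 * M := by
      have := abs_sub (v y) (v x)
      have hy := hM y; have hx := hM x
      have := abs_sub_abs_le_abs_sub (v y) (v x)
      calc |v y - v x| ≤ |v y| + |v x| := abs_sub _ _
        _ ≤ 2 * M := by linarith
    nlinarith [abs_nonneg (v y - v x)]
  exact mul_le_mul (hWbd x y) h1 (abs_nonneg _) hCW

lemma Fop_bound {D : ℝ → ℝ} {L : ℝ} (hD : ∀ a b : ℝ, |D a - D b| ≤ L * |a - b|)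
    (hL : 0 ≤ L) {W : ℝ → ℝ → ℝ} {CW : ℝ} (hWbd : ∀ x y, |W x y| ≤ CW)
    {v : ℝ → ℝ} {M : ℝ} (hM : ∀ y, |v y| ≤ M) (x : ℝ) :
    |Fop W D v x| ≤ CW * (|D 0| + L * (2 * M)) := by
  have := intervalIntegral.norm_integral_le_of_norm_le_const
    (a := (0:ℝ)) (b := 1) (C := CW * (|D 0| + L * (2 * M)))
    (f := fun y => W x y * D (v y - v x))
    (fun y _ => by rw [Real.norm_eq_abs]; exact Fop_integrand_bound hD hL hWbd hM x y)
  rw [Fop_def]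
  simpa [Real.norm_eq_abs] using this

lemma Fop_integrand_measurable {D : ℝ → ℝ} (hDc : Continuous D)
    {W : ℝ → ℝ → ℝ} (hWmeas : Measurable (Function.uncurry W))
    {v : ℝ → ℝ} (hv : Measurable v) (x : ℝ) :
    Measurable (fun y => W x y * D (v y - v x)) := by
  have h1 : Measurable (fun y => W x y) :=
    hWmeas.comp (measurable_const.prodMk measurable_id)
  exact h1.mul ((hDc.measurable).comp ((hv.sub measurable_const)))

lemma Fop_integrand_integrable {D : ℝ → ℝ} {L : ℝ} (hD : ∀ a b : ℝ, |D a - D b| ≤ L * |a - b|)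
    (hL : 0 ≤ L) (hDc : Continuous D)
    {W : ℝ → ℝ → ℝ} {CW : ℝ} (hWmeas : Measurable (Function.uncurry W))
    (hWbd : ∀ x y, |W x y| ≤ CW)
    {v : ℝ → ℝ} (hv : Measurable v) {M : ℝ} (hM : ∀ y, |v y| ≤ M) (x : ℝ) :
    IntervalIntegrable (fun y => W x y * D (v y - v x)) volume 0 1 :=
  intervalIntegrable_of_bounded (Fop_integrand_measurable hDc hWmeas hv x)
    (fun y _ => Fop_integrand_bound hD hL hWbd hM x y)

/-- Lipschitz-type estimate for `Fop`. -/
lemma Fop_diff {D : ℝ → ℝ} {L : ℝ} (hD : ∀ a b : ℝ, |D a - D b| ≤ L * |a - b|)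
    {W : ℝ → ℝ → ℝ} {CW : ℝ} (hWbd : ∀ x y, |W x y| ≤ CW)
    {v w : ℝ → ℝ} {x δ : ℝ}
    (h1 : IntervalIntegrable (fun y => W x y * D (v y - v x)) volume 0 1)
    (h2 : IntervalIntegrable (fun y => W x y * D (w y - w x)) volume 0 1)
    (hy : ∀ y ∈ Icc (0:ℝ) 1, |v y - w y| ≤ δ) (hx : |v x - w x| ≤ δ) :
    |Fop W D v x - Fop W D w x| ≤ 2 * L * CW * δ := by
  have hCW : 0 ≤ CW := (abs_nonneg _).trans (hWbd 0 0)
  rw [Fop_def, Fop_def, ← intervalIntegral.integral_sub h1 h2]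
  have key : ∀ y ∈ Set.uIoc (0:ℝ) 1,
      ‖W x y * D (v y - v x) - W x y * D (w y - w x)‖ ≤ CW * (L * (2 * δ)) := by
    intro y hy'
    have hyIcc : y ∈ Icc (0:ℝ) 1 := by
      rw [Set.uIoc_of_le (zero_le_one)] at hy'
      exact ⟨le_of_lt hy'.1, hy'.2⟩
    rw [Real.norm_eq_abs, ← mul_sub, abs_mul]
    have hdd : |D (v y - v x) - D (w y - w x)| ≤ L * (2 * δ) := by
      have := hD (v y - v x) (w y - w x)
      have h3 : |(v y - v x) - (w y - w x)| ≤ 2 * δ := by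
        have e : (v y - v x) - (w y - w x) = (v y - w y) - (v x - w x) := by ring
        rw [e]
        have := abs_sub (v y - w y) (v x - w x)
        have hyb := hy y hyIcc
        calc |(v y - w y) - (v x - w x)| ≤ |v y - w y| + |v x - w x| := abs_sub _ _
          _ ≤ 2 * δ := by linarith
      have hL : 0 ≤ L := by
        have h01 := hD 0 1
        rw [show |(0:ℝ) - 1| = 1 by norm_num, mul_one] at h01
        exact (abs_nonneg _).trans h01
      calc |D (v y - v x) - D (w y - w x)| ≤ L * |(v y - v x) - (w y - w x)| := this
        _ ≤ L * (2 * δ) := by exact mul_le_mul_of_nonneg_left h3 hL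
    exact mul_le_mul (hWbd x y) hdd (abs_nonneg _) hCW
  have := intervalIntegral.norm_integral_le_of_norm_le_const (C := CW * (L * (2 * δ))) key
  rw [Real.norm_eq_abs] at this
  calc |∫ y in (0:ℝ)..1, (W x y * D (v y - v x) - W x y * D (w y - w x))|
      ≤ CW * (L * (2 * δ)) * |1 - 0| := this
    _ = 2 * L * CW * δ := by norm_num; ring



/-- Joint measurability of `(s, x) ↦ Fop W D (u s) x`. -/
lemma Fop_param_meas {D : ℝ → ℝ} (hDc : Continuous D)
    {W : ℝ → ℝ → ℝ} (hWmeas : Measurable (Function.uncurry W))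
    {u : ℝ → ℝ → ℝ} (hu : Measurable (Function.uncurry u)) :
    Measurable (fun p : ℝ × ℝ => Fop W D (u p.1) p.2) := by
  have heq : (fun p : ℝ × ℝ => Fop W D (u p.1) p.2)
      = fun p : ℝ × ℝ => ∫ y, W p.2 y * D (u p.1 y - u p.1 p.2)
          ∂(volume.restrict (Ioc (0:ℝ) 1)) := by
    funext p
    rw [Fop, intervalIntegral.integral_of_le zero_le_one]
  rw [heq]
  have hf : StronglyMeasurable
      (fun q : (ℝ × ℝ) × ℝ => W q.1.2 q.2 * D (u q.1.1 q.2 - u q.1.1 q.1.2)) := by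
    apply Measurable.stronglyMeasurable
    have h1 : Measurable (fun q : (ℝ × ℝ) × ℝ => W q.1.2 q.2) :=
      hWmeas.comp ((measurable_snd.comp measurable_fst).prodMk measurable_snd)
    have h2 : Measurable (fun q : (ℝ × ℝ) × ℝ => u q.1.1 q.2) :=
      hu.comp ((measurable_fst.comp measurable_fst).prodMk measurable_snd)
    have h3 : Measurable (fun q : (ℝ × ℝ) × ℝ => u q.1.1 q.1.2) :=
      hu.comp ((measurable_fst.comp measurable_fst).prodMk
        (measurable_snd.comp measurable_fst))
    exact h1.mul (hDc.measurable.comp (h2.sub h3))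
  exact hf.integral_prod_right'.measurable

/-- Joint measurability of the primitive `(t, x) ↦ ∫_0^t h s x ds`. -/
lemma primitive_meas {h : ℝ → ℝ → ℝ} (hh : Measurable (fun p : ℝ × ℝ => h p.1 p.2)) :
    Measurable (fun p : ℝ × ℝ => ∫ s in (0:ℝ)..p.1, h s p.2) := by
  have key : ∀ p : ℝ × ℝ, (∫ s in (0:ℝ)..p.1, h s p.2)
      = (∫ s, (Ioc (0:ℝ) p.1).indicator (fun s => h s p.2) s)
        - ∫ s, (Ioc p.1 (0:ℝ)).indicator (fun s => h s p.2) s := by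
    intro p
    rw [integral_indicator measurableSet_Ioc, integral_indicator measurableSet_Ioc]
    rfl
  have m1 : Measurable (fun p : ℝ × ℝ => ∫ s, (Ioc (0:ℝ) p.1).indicator
      (fun s => h s p.2) s) := by
    have hf : StronglyMeasurable (fun q : (ℝ × ℝ) × ℝ =>
        (Ioc (0:ℝ) q.1.1).indicator (fun s => h s q.1.2) q.2) := by
      apply Measurable.stronglyMeasurable
      have : (fun q : (ℝ × ℝ) × ℝ => (Ioc (0:ℝ) q.1.1).indicator (fun s => h s q.1.2) q.2)
          = fun q : (ℝ × ℝ) × ℝ => if 0 < q.2 ∧ q.2 ≤ q.1.1 then h q.2 q.1.2 else 0 := by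
        funext q; rw [Set.indicator_apply]; rfl
      rw [this]
      apply Measurable.ite
      · exact MeasurableSet.inter
          (measurableSet_lt measurable_const measurable_snd)
          (measurableSet_le measurable_snd (measurable_fst.comp measurable_fst))
      · exact hh.comp (measurable_snd.prodMk (measurable_snd.comp measurable_fst))
      · exact measurable_const
    exact hf.integral_prod_right'.measurable
  have m2 : Measurable (fun p : ℝ × ℝ => ∫ s, (Ioc p.1 (0:ℝ)).indicator
      (fun s => h s p.2) s) := by
    have hf : StronglyMeasurable (fun q : (ℝ × ℝ) × ℝ =>
        (Ioc q.1.1 (0:ℝ)).indicator (fun s => h s q.1.2) q.2) := by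
      apply Measurable.stronglyMeasurable
      have : (fun q : (ℝ × ℝ) × ℝ => (Ioc q.1.1 (0:ℝ)).indicator (fun s => h s q.1.2) q.2)
          = fun q : (ℝ × ℝ) × ℝ => if q.1.1 < q.2 ∧ q.2 ≤ 0 then h q.2 q.1.2 else 0 := by
        funext q; rw [Set.indicator_apply]; rfl
      rw [this]
      apply Measurable.ite
      · exact MeasurableSet.inter
          (measurableSet_lt (measurable_fst.comp measurable_fst) measurable_snd)
          (measurableSet_le measurable_snd measurable_const)
      · exact hh.comp (measurable_snd.prodMk (measurable_snd.comp measurable_fst))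
      · exact measurable_const
    exact hf.integral_prod_right'.measurable
  simp only [key]
  exact m1.sub m2

/-- `|∫_0^t |s|^n ds| = |t|^(n+1)/(n+1)`. -/
lemma abs_integral_abs_pow (n : ℕ) (t : ℝ) :
    |∫ s in (0:ℝ)..t, |s| ^ n| = |t| ^ (n + 1) / (n + 1) := by
  rcases le_total 0 t with h | h
  · have e : (∫ s in (0:ℝ)..t, |s| ^ n) = ∫ s in (0:ℝ)..t, s ^ n := by
      apply intervalIntegral.integral_congr
      intro s hs
      rw [Set.uIcc_of_le h] at hs
      simp only []
      rw [abs_of_nonneg hs.1]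
    rw [e, integral_pow]
    rw [abs_of_nonneg h]
    simp only [zero_pow (Nat.succ_ne_zero n), sub_zero]
    rw [abs_of_nonneg (by positivity)]
  · have e : (∫ s in (0:ℝ)..t, |s| ^ n) = ∫ s in (0:ℝ)..t, (-s) ^ n := by
      apply intervalIntegral.integral_congr
      intro s hs
      rw [Set.uIcc_of_ge h] at hs
      simp only []
      rw [abs_of_nonpos hs.2]
    rw [e]
    have e2 : (∫ s in (0:ℝ)..t, (-s) ^ n) = ∫ s in (-t)..(-(0:ℝ)), s ^ n :=
      intervalIntegral.integral_comp_neg (fun s => s ^ n)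
    rw [e2, neg_zero, integral_pow, abs_of_nonpos h]
    have hnt : (0:ℝ) ≤ -t := by linarith
    have h1 : ((0:ℝ) ^ (n + 1) - (-t) ^ (n + 1)) / (n + 1) ≤ 0 := by
      apply div_nonpos_of_nonpos_of_nonneg
      · simp only [zero_pow (Nat.succ_ne_zero n)]
        have : (0:ℝ) ≤ (-t) ^ (n + 1) := by positivity
        linarith
      · positivity
    rw [abs_of_nonpos h1]
    simp only [zero_pow (Nat.succ_ne_zero n)]
    field_simp
    ring


/-- Picard iterates. -/
noncomputable def picard (W : ℝ → ℝ → ℝ) (D g : ℝ → ℝ) : ℕ → ℝ → ℝ → ℝ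
  | 0 => fun _ x => g x
  | n + 1 => fun t x => g x + ∫ s in (0:ℝ)..t, Fop W D (picard W D g n s) x

lemma picard_succ_apply (W : ℝ → ℝ → ℝ) (D g : ℝ → ℝ) (n : ℕ) (t x : ℝ) :
    picard W D g (n + 1) t x = g x + ∫ s in (0:ℝ)..t, Fop W D (picard W D g n s) x := rfl

lemma picard_meas {D : ℝ → ℝ} (hDc : Continuous D)
    {W : ℝ → ℝ → ℝ} (hWmeas : Measurable (Function.uncurry W))
    {g : ℝ → ℝ} (hgmeas : Measurable g) :
    ∀ n, Measurable (Function.uncurry (picard W D g n)) := by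
  intro n
  induction n with
  | zero => exact hgmeas.comp measurable_snd
  | succ n ih =>
    have : Function.uncurry (picard W D g (n + 1))
        = fun p : ℝ × ℝ => g p.2 + ∫ s in (0:ℝ)..p.1, Fop W D (picard W D g n s) p.2 := rfl
    rw [this]
    exact (hgmeas.comp measurable_snd).add
      (primitive_meas (Fop_param_meas hDc hWmeas ih))


/-- The coefficient sequence of the Picard iteration estimates. -/
noncomputable def cseq (C1 K : ℝ) (n : ℕ) : ℝ := C1 * K ^ n / (Nat.factorial (n + 1))

lemma cseq_nonneg {C1 K : ℝ} (hC1 : 0 ≤ C1) (hK : 0 ≤ K) (n : ℕ) : 0 ≤ cseq C1 K n :=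
  div_nonneg (mul_nonneg hC1 (pow_nonneg hK n)) (Nat.cast_nonneg _)

lemma cseq_succ (C1 K : ℝ) (n : ℕ) :
    cseq C1 K (n + 1) = K * cseq C1 K n / ((n : ℝ) + 2) := by
  unfold cseq
  rw [show n + 1 + 1 = n + 2 from rfl, Nat.factorial_succ (n + 1)]
  have h1 : ((Nat.factorial (n + 1) : ℝ)) ≠ 0 := Nat.cast_ne_zero.2 (Nat.factorial_ne_zero _)
  have h2 : ((n : ℝ) + 2) ≠ 0 := by positivity
  push_cast
  field_simp
  ring

lemma cseq_term_le {C1 K : ℝ} (hC1 : 0 ≤ C1) (hK : 0 ≤ K) (k : ℕ) (t : ℝ) :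
    cseq C1 K k * |t| ^ (k + 1) ≤ (C1 * |t|) * ((K * |t|) ^ k / (Nat.factorial k)) := by
  have h1 : (0:ℝ) < Nat.factorial k := by exact_mod_cast Nat.factorial_pos k
  have h2 : ((Nat.factorial k : ℝ)) ≤ (Nat.factorial (k + 1) : ℝ) :=
    Nat.cast_le.2 (Nat.factorial_le (Nat.le_succ k))
  have e1 : cseq C1 K k * |t| ^ (k + 1) = C1 * K ^ k * |t| ^ (k + 1) / (Nat.factorial (k + 1)) := by
    unfold cseq; ring
  have e2 : (C1 * |t|) * ((K * |t|) ^ k / (Nat.factorial k))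
      = C1 * K ^ k * |t| ^ (k + 1) / (Nat.factorial k) := by
    rw [mul_pow, pow_succ]; ring
  rw [e1, e2]
  apply div_le_div_of_nonneg_left ?_ h1 h2
  positivity

lemma cseq_sum_le {C1 K : ℝ} (hC1 : 0 ≤ C1) (hK : 0 ≤ K) (n : ℕ) (t : ℝ) :
    ∑ k ∈ Finset.range n, cseq C1 K k * |t| ^ (k + 1) ≤ C1 * |t| * Real.exp (K * |t|) := by
  calc ∑ k ∈ Finset.range n, cseq C1 K k * |t| ^ (k + 1)
      ≤ ∑ k ∈ Finset.range n, (C1 * |t|) * ((K * |t|) ^ k / (Nat.factorial k)) :=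
        Finset.sum_le_sum fun k _ => cseq_term_le hC1 hK k t
    _ = (C1 * |t|) * ∑ k ∈ Finset.range n, (K * |t|) ^ k / (Nat.factorial k) := by
        rw [Finset.mul_sum]
    _ ≤ (C1 * |t|) * Real.exp (K * |t|) := by
        apply mul_le_mul_of_nonneg_left ?_ (by positivity)
        exact Real.sum_le_exp_of_nonneg (by positivity) n

lemma cseq_summable {C1 K : ℝ} (hC1 : 0 ≤ C1) (hK : 0 ≤ K) (t : ℝ) :
    Summable (fun n => cseq C1 K n * |t| ^ (n + 1)) := by
  apply Summable.of_nonneg_of_le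
    (fun n => mul_nonneg (cseq_nonneg hC1 hK n) (by positivity))
    (fun n => cseq_term_le hC1 hK n t)
  exact (Real.summable_pow_div_factorial (K * |t|)).mul_left (C1 * |t|)

lemma abs_integral_const_abs_pow {C : ℝ} (hC : 0 ≤ C) (n : ℕ) (t : ℝ) :
    |∫ s in (0:ℝ)..t, C * |s| ^ n| = C * (|t| ^ (n + 1) / (n + 1)) := by
  rw [intervalIntegral.integral_const_mul, abs_mul, abs_of_nonneg hC, abs_integral_abs_pow]

lemma abs_le_of_mem_uIoc_zero {s t : ℝ} (hs : s ∈ Set.uIoc 0 t) : |s| ≤ |t| := by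
  rcases Set.mem_uIoc.1 hs with h | h
  · exact abs_le_abs h.2 (by linarith [h.1])
  · rw [abs_of_nonpos h.2, abs_of_nonpos (by linarith [h.1] : t ≤ 0)]
    linarith [h.1]

lemma abs_le_max_of_mem_uIoc {s a b : ℝ} (hs : s ∈ Set.uIoc a b) : |s| ≤ max |a| |b| := by
  rcases Set.mem_uIoc.1 hs with h | h
  · exact abs_le_max_abs_abs h.1.le h.2
  · exact (abs_le_max_abs_abs h.1.le h.2).trans (le_of_eq (max_comm _ _))

end HeatWP

set_option maxHeartbeats 2000000 in
open HeatWP in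
/-- Well-posedness of the IVP for the nonlocal heat equation
`∂u/∂t(x,t) = ∫_0^1 W(x,y) D(u(y,t) − u(x,t)) dy`, `u(x,0) = g(x)`:
for every `T > 0` there is a unique continuously differentiable (in time) bounded
solution on `[−T, T]`. -/
theorem heat_equation_wellposed
    (D : ℝ → ℝ) (L : ℝ) (hD : ∀ a b : ℝ, |D a - D b| ≤ L * |a - b|)
    (W : ℝ → ℝ → ℝ) (hWmeas : Measurable (Function.uncurry W))
    (CW : ℝ) (hWbd : ∀ x y, |W x y| ≤ CW)
    (g : ℝ → ℝ) (hgmeas : Measurable g) (Cg : ℝ) (hgbd : ∀ x, |g x| ≤ Cg)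
    (T : ℝ) (hT : 0 < T) :
    ∃ u : ℝ → ℝ → ℝ,
      (Measurable (Function.uncurry u) ∧
       (∃ M, ∀ t ∈ Icc (-T) T, ∀ x, |u t x| ≤ M) ∧
       (∀ x, u 0 x = g x) ∧
       (∀ t ∈ Icc (-T) T, ∀ x ∈ Icc (0:ℝ) 1,
         HasDerivAt (fun s => u s x)
           (∫ y in (0:ℝ)..1, W x y * D (u t y - u t x)) t) ∧
       (∀ x ∈ Icc (0:ℝ) 1, ContinuousOn
         (fun t => ∫ y in (0:ℝ)..1, W x y * D (u t y - u t x)) (Icc (-T) T))) ∧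
      (∀ v : ℝ → ℝ → ℝ,
        (Measurable (Function.uncurry v) ∧
         (∃ M, ∀ t ∈ Icc (-T) T, ∀ x, |v t x| ≤ M) ∧
         (∀ x, v 0 x = g x) ∧
         (∀ t ∈ Icc (-T) T, ∀ x ∈ Icc (0:ℝ) 1,
           HasDerivAt (fun s => v s x)
             (∫ y in (0:ℝ)..1, W x y * D (v t y - v t x)) t) ∧
         (∀ x ∈ Icc (0:ℝ) 1, ContinuousOn
           (fun t => ∫ y in (0:ℝ)..1, W x y * D (v t y - v t x)) (Icc (-T) T))) →
        ∀ t ∈ Icc (-T) T, ∀ x ∈ Icc (0:ℝ) 1, v t x = u t x) := by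
  -- basic positivity facts
  have hL : 0 ≤ L := by
    have h01 := hD 0 1
    rw [show |(0:ℝ) - 1| = 1 by norm_num, mul_one] at h01
    exact (abs_nonneg _).trans h01
  have hCW : 0 ≤ CW := (abs_nonneg _).trans (hWbd 0 0)
  have hCg : 0 ≤ Cg := (abs_nonneg _).trans (hgbd 0)
  have hDc : Continuous D := by
    have : LipschitzWith (Real.toNNReal L) D :=
      LipschitzWith.of_dist_le_mul fun a b => by
        rw [Real.dist_eq, Real.dist_eq]
        exact (hD a b).trans
          (mul_le_mul_of_nonneg_right (Real.le_coe_toNNReal L) (abs_nonneg _))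
    exact this.continuous
  set T' : ℝ := T + 1 with hT'def
  have hT' : 0 < T' := by rw [hT'def]; linarith
  set K : ℝ := 2 * L * CW with hKdef
  have hK : 0 ≤ K := by rw [hKdef]; positivity
  set C1 : ℝ := CW * (|D 0| + L * (2 * Cg)) with hC1def
  have hC1 : 0 ≤ C1 := by
    rw [hC1def]
    have : 0 ≤ |D 0| + L * (2 * Cg) := by positivity
    positivity
  set MB : ℝ := Cg + C1 * T' * Real.exp (K * T') with hMBdef
  have hMB : 0 ≤ MB := by rw [hMBdef]; positivity
  set CB : ℝ := CW * (|D 0| + L * (2 * MB)) with hCBdef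
  have hCB : 0 ≤ CB := by
    rw [hCBdef]
    have : 0 ≤ |D 0| + L * (2 * MB) := by positivity
    positivity
  have hPmeas := picard_meas hDc hWmeas hgmeas (W := W)
  have hFsec : ∀ {u : ℝ → ℝ → ℝ}, Measurable (Function.uncurry u) →
      ∀ x : ℝ, Measurable (fun s => Fop W D (u s) x) := fun {u} hu x =>
    (Fop_param_meas hDc hWmeas hu).comp (measurable_id.prodMk measurable_const)
  have hPsec : ∀ (n : ℕ) (s : ℝ), Measurable (picard W D g n s) := fun n s =>
    (hPmeas n).comp (measurable_const.prodMk measurable_id)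
  -- the key iterative estimates
  have hmain : ∀ n : ℕ,
      (∀ t x : ℝ, |picard W D g (n+1) t x - picard W D g n t x| ≤ cseq C1 K n * |t|^(n+1)) ∧
      (∀ t x : ℝ, |picard W D g n t x| ≤
        Cg + ∑ k ∈ Finset.range n, cseq C1 K k * |t|^(k+1)) := by
    intro n
    induction n with
    | zero =>
      constructor
      · intro t x
        have he : picard W D g 1 t x - picard W D g 0 t x = (t - 0) • Fop W D g x := by
          show (g x + ∫ s in (0:ℝ)..t, Fop W D (picard W D g 0 s) x) - g x = _
          rw [add_sub_cancel_left]
          have : (fun s : ℝ => Fop W D (picard W D g 0 s) x) = fun _ : ℝ => Fop W D g x := rfl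
          rw [this, intervalIntegral.integral_const]
        rw [he, smul_eq_mul, abs_mul, sub_zero]
        have hb := Fop_bound hD hL hWbd hgbd x
        calc |t| * |Fop W D g x| ≤ |t| * C1 := by
              exact mul_le_mul_of_nonneg_left (le_of_le_of_eq hb hC1def.symm) (abs_nonneg t)
          _ = cseq C1 K 0 * |t|^1 := by unfold cseq; simp [Nat.factorial]; ring
      · intro t x; simpa [picard] using hgbd x
    | succ n ih =>
      obtain ⟨ihd, ihb⟩ := ih
      have hb1 : ∀ t x, |picard W D g (n+1) t x| ≤
          Cg + ∑ k ∈ Finset.range (n+1), cseq C1 K k * |t|^(k+1) := by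
        intro t x
        rw [Finset.sum_range_succ]
        have h1 := ihd t x
        have h2 := ihb t x
        have h3 : |picard W D g (n+1) t x| ≤
            |picard W D g n t x| + |picard W D g (n+1) t x - picard W D g n t x| := by
          have := abs_add_le (picard W D g n t x) (picard W D g (n+1) t x - picard W D g n t x)
          simpa using this
        linarith
      refine ⟨?_, hb1⟩
      intro t x
      -- a bound valid on the whole s-interval
      have henlarge : ∀ (m : ℕ), m ≤ n + 1 → ∀ s : ℝ, |s| ≤ |t| →
          Cg + ∑ k ∈ Finset.range m, cseq C1 K k * |s|^(k+1) ≤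
          Cg + ∑ k ∈ Finset.range (n+1), cseq C1 K k * |t|^(k+1) := by
        intro m hm s hs
        have h1 : ∑ k ∈ Finset.range m, cseq C1 K k * |s|^(k+1) ≤
            ∑ k ∈ Finset.range m, cseq C1 K k * |t|^(k+1) :=
          Finset.sum_le_sum fun k _ => mul_le_mul_of_nonneg_left
            (pow_le_pow_left₀ (abs_nonneg s) hs (k+1)) (cseq_nonneg hC1 hK k)
        have h2 : ∑ k ∈ Finset.range m, cseq C1 K k * |t|^(k+1) ≤
            ∑ k ∈ Finset.range (n+1), cseq C1 K k * |t|^(k+1) :=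
          Finset.sum_le_sum_of_subset_of_nonneg (Finset.range_subset_range.2 hm)
            (fun k _ _ => mul_nonneg (cseq_nonneg hC1 hK k) (by positivity))
        linarith
      set B : ℝ := Cg + ∑ k ∈ Finset.range (n+1), cseq C1 K k * |t|^(k+1) with hBdef
      have hBn : ∀ s : ℝ, |s| ≤ |t| → ∀ x' : ℝ, |picard W D g n s x'| ≤ B :=
        fun s hs x' => (ihb s x').trans (henlarge n (Nat.le_succ n) s hs)
      have hBn1 : ∀ s : ℝ, |s| ≤ |t| → ∀ x' : ℝ, |picard W D g (n+1) s x'| ≤ B :=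
        fun s hs x' => (hb1 s x').trans (henlarge (n+1) le_rfl s hs)
      -- interval integrability in s
      have hint1 : IntervalIntegrable (fun s => Fop W D (picard W D g n s) x) volume 0 t :=
        intervalIntegrable_of_bounded (hFsec (hPmeas n) x)
          (fun s hs => Fop_bound hD hL hWbd (hBn s (abs_le_of_mem_uIoc_zero hs)) x)
      have hint2 : IntervalIntegrable (fun s => Fop W D (picard W D g (n+1) s) x) volume 0 t :=
        intervalIntegrable_of_bounded (hFsec (hPmeas (n+1)) x)
          (fun s hs => Fop_bound hD hL hWbd (hBn1 s (abs_le_of_mem_uIoc_zero hs)) x)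
      have hsub : picard W D g (n+2) t x - picard W D g (n+1) t x =
          ∫ s in (0:ℝ)..t,
            (Fop W D (picard W D g (n+1) s) x - Fop W D (picard W D g n s) x) := by
        show (g x + ∫ s in (0:ℝ)..t, Fop W D (picard W D g (n+1) s) x)
            - (g x + ∫ s in (0:ℝ)..t, Fop W D (picard W D g n s) x) = _
        rw [intervalIntegral.integral_sub hint2 hint1]
        ring
      rw [hsub]
      have hptw : ∀ᵐ s ∂(volume.restrict (Set.uIoc (0:ℝ) t)),
          ‖Fop W D (picard W D g (n+1) s) x - Fop W D (picard W D g n s) x‖ ≤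
            (K * cseq C1 K n) * |s|^(n+1) := by
        refine (ae_restrict_iff' measurableSet_uIoc).2 (ae_of_all _ fun s hs => ?_)
        rw [Real.norm_eq_abs]
        have hsabs := abs_le_of_mem_uIoc_zero hs
        have hi1 : IntervalIntegrable
            (fun y => W x y * D (picard W D g (n+1) s y - picard W D g (n+1) s x))
            volume 0 1 :=
          Fop_integrand_integrable hD hL hDc hWmeas hWbd (hPsec (n+1) s)
            (hBn1 s hsabs) x
        have hi2 : IntervalIntegrable
            (fun y => W x y * D (picard W D g n s y - picard W D g n s x)) volume 0 1 :=
          Fop_integrand_integrable hD hL hDc hWmeas hWbd (hPsec n s) (hBn s hsabs) x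
        have hdiff := Fop_diff hD hWbd hi1 hi2
          (fun y _ => ihd s y) (ihd s x)
        calc |Fop W D (picard W D g (n+1) s) x - Fop W D (picard W D g n s) x|
            ≤ 2 * L * CW * (cseq C1 K n * |s|^(n+1)) := hdiff
          _ = (K * cseq C1 K n) * |s|^(n+1) := by rw [hKdef]; ring
      have hgint : IntervalIntegrable (fun s => (K * cseq C1 K n) * |s|^(n+1)) volume 0 t :=
        (Continuous.intervalIntegrable (continuous_const.mul ((continuous_abs).pow (n+1))) 0 t)
      have hbnd := intervalIntegral.norm_integral_le_abs_of_norm_le hptw hgint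
      rw [Real.norm_eq_abs] at hbnd
      refine hbnd.trans ?_
      rw [abs_integral_const_abs_pow (mul_nonneg hK (cseq_nonneg hC1 hK n)) (n+1) t]
      have he : cseq C1 K (n+1) = K * cseq C1 K n / ((n:ℝ) + 2) := cseq_succ C1 K n
      rw [he]
      rw [show (((n+1 : ℕ) : ℝ) + 1) = (n:ℝ) + 2 by push_cast; ring]
      rw [div_mul_eq_mul_div, mul_div_assoc]
  -- convergence of the Picard iterates
  have hsumm : ∀ t : ℝ, Summable (fun n => cseq C1 K n * |t| ^ (n + 1)) :=
    fun t => cseq_summable hC1 hK t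
  have hcauchy : ∀ t x : ℝ, CauchySeq (fun n => picard W D g n t x) := by
    intro t x
    apply cauchySeq_of_dist_le_of_summable (fun n => cseq C1 K n * |t| ^ (n + 1))
      ?_ (hsumm t)
    intro n
    rw [Real.dist_eq, abs_sub_comm]
    exact (hmain n).1 t x
  set U : ℝ → ℝ → ℝ := fun t x => limUnder atTop (fun n => picard W D g n t x) with hUdef
  have hUt : ∀ t x : ℝ, Filter.Tendsto (fun n => picard W D g n t x) atTop (nhds (U t x)) :=
    fun t x => (hcauchy t x).tendsto_limUnder
  have hUmeas : Measurable (Function.uncurry U) := by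
    apply measurable_of_tendsto_metrizable (fun n => hPmeas n)
    rw [tendsto_pi_nhds]
    exact fun p => hUt p.1 p.2
  have hUsec : ∀ s : ℝ, Measurable (U s) :=
    fun s => hUmeas.comp (measurable_const.prodMk measurable_id)
  have hSBmono : ∀ s t : ℝ, |s| ≤ |t| →
      Cg + C1 * |s| * Real.exp (K * |s|) ≤ Cg + C1 * |t| * Real.exp (K * |t|) := by
    intro s t hst
    have h1 : Real.exp (K * |s|) ≤ Real.exp (K * |t|) :=
      Real.exp_le_exp.2 (mul_le_mul_of_nonneg_left hst hK)
    have h2 : (0:ℝ) < Real.exp (K * |s|) := Real.exp_pos _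
    have h3 : C1 * |s| * Real.exp (K * |s|) ≤ C1 * |t| * Real.exp (K * |t|) :=
      mul_le_mul (mul_le_mul_of_nonneg_left hst hC1) h1 h2.le
        (by positivity)
    linarith
  have hPB : ∀ (n : ℕ) (s t : ℝ), |s| ≤ |t| → ∀ y : ℝ,
      |picard W D g n s y| ≤ Cg + C1 * |t| * Real.exp (K * |t|) := by
    intro n s t hst y
    refine ((hmain n).2 s y).trans ?_
    have := cseq_sum_le hC1 hK n s
    have := hSBmono s t hst
    linarith
  have hUB : ∀ (s t : ℝ), |s| ≤ |t| → ∀ y : ℝ,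
      |U s y| ≤ Cg + C1 * |t| * Real.exp (K * |t|) := by
    intro s t hst y
    apply le_of_tendsto (hUt s y).abs
    exact Filter.Eventually.of_forall fun n => hPB n s t hst y
  have hU0 : ∀ x, U 0 x = g x := by
    intro x
    have hz : ∀ n, picard W D g n 0 x = g x := by
      intro n
      cases n with
      | zero => rfl
      | succ n =>
        show g x + ∫ s in (0:ℝ)..0, Fop W D (picard W D g n s) x = g x
        rw [intervalIntegral.integral_same, add_zero]
    have h1 : Filter.Tendsto (fun _ : ℕ => g x) atTop (nhds (U 0 x)) := by
      have := hUt 0 x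
      rwa [show (fun n => picard W D g n 0 x) = fun _ : ℕ => g x from funext hz] at this
    exact tendsto_nhds_unique h1 tendsto_const_nhds
  have htail : ∀ (n : ℕ) (t s x : ℝ), |s| ≤ |t| →
      |picard W D g n s x - U s x| ≤ ∑' m, cseq C1 K (n + m) * |t| ^ (n + m + 1) := by
    intro n t s x hst
    have hd : ∀ k, dist (picard W D g k s x) (picard W D g (k+1) s x) ≤
        cseq C1 K k * |t| ^ (k + 1) := by
      intro k
      rw [Real.dist_eq, abs_sub_comm]
      exact ((hmain k).1 s x).trans (mul_le_mul_of_nonneg_left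
        (pow_le_pow_left₀ (abs_nonneg _) hst _) (cseq_nonneg hC1 hK k))
    have := dist_le_tsum_of_dist_le_of_tendsto (fun k => cseq C1 K k * |t| ^ (k + 1))
      hd (hsumm t) (hUt s x) n
    rwa [Real.dist_eq] at this
  have htail0 : ∀ t : ℝ, Filter.Tendsto
      (fun n => ∑' m, cseq C1 K (n + m) * |t| ^ (n + m + 1)) atTop (nhds 0) := by
    intro t
    have h1 := tendsto_sum_nat_add (f := fun k => cseq C1 K k * |t| ^ (k + 1))
    refine h1.congr fun n => tsum_congr fun m => by rw [add_comm m n]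
  -- the integral equation for U
  have hintU : ∀ (t x : ℝ),
      IntervalIntegrable (fun s => Fop W D (U s) x) volume 0 t := by
    intro t x
    apply intervalIntegrable_of_bounded (hFsec hUmeas x)
    intro s hs
    exact Fop_bound hD hL hWbd (hUB s t (abs_le_of_mem_uIoc_zero hs)) x
  have hintP : ∀ (n : ℕ) (t x : ℝ),
      IntervalIntegrable (fun s => Fop W D (picard W D g n s) x) volume 0 t := by
    intro n t x
    apply intervalIntegrable_of_bounded (hFsec (hPmeas n) x)
    intro s hs
    exact Fop_bound hD hL hWbd (hPB n s t (abs_le_of_mem_uIoc_zero hs)) x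
  have hIntEq : ∀ t x : ℝ, U t x = g x + ∫ s in (0:ℝ)..t, Fop W D (U s) x := by
    intro t x
    have hAn : Filter.Tendsto (fun n => ∫ s in (0:ℝ)..t, Fop W D (picard W D g n s) x)
        atTop (nhds (∫ s in (0:ℝ)..t, Fop W D (U s) x)) := by
      rw [← tendsto_sub_nhds_zero_iff, tendsto_zero_iff_norm_tendsto_zero]
      apply squeeze_zero (g := fun n => K * (∑' m, cseq C1 K (n + m) * |t| ^ (n + m + 1)) * |t|)
        (fun n => norm_nonneg _)
      · intro n
        rw [← intervalIntegral.integral_sub (hintP n t x) (hintU t x)]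
        have hptw : ∀ s ∈ Set.uIoc (0:ℝ) t,
            ‖Fop W D (picard W D g n s) x - Fop W D (U s) x‖ ≤
              K * (∑' m, cseq C1 K (n + m) * |t| ^ (n + m + 1)) := by
          intro s hs
          rw [Real.norm_eq_abs]
          have hsabs := abs_le_of_mem_uIoc_zero hs
          have hi1 : IntervalIntegrable
              (fun y => W x y * D (picard W D g n s y - picard W D g n s x)) volume 0 1 :=
            Fop_integrand_integrable hD hL hDc hWmeas hWbd (hPsec n s)
              (hPB n s t hsabs) x
          have hi2 : IntervalIntegrable
              (fun y => W x y * D (U s y - U s x)) volume 0 1 :=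
            Fop_integrand_integrable hD hL hDc hWmeas hWbd (hUsec s)
              (hUB s t hsabs) x
          have hdiff := Fop_diff hD hWbd hi1 hi2
            (fun y _ => htail n t s y hsabs) (htail n t s x hsabs)
          calc |Fop W D (picard W D g n s) x - Fop W D (U s) x|
              ≤ 2 * L * CW * (∑' m, cseq C1 K (n + m) * |t| ^ (n + m + 1)) := hdiff
            _ = K * (∑' m, cseq C1 K (n + m) * |t| ^ (n + m + 1)) := by rw [hKdef]
        have := intervalIntegral.norm_integral_le_of_norm_le_const hptw
        rw [sub_zero] at this
        exact this
      · have h1 := ((htail0 t).const_mul K).mul_const |t|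
        simpa using h1
    have h2 : Filter.Tendsto (fun n => picard W D g (n+1) t x) atTop (nhds (U t x)) :=
      (hUt t x).comp (tendsto_add_atTop_nat 1)
    have h3 : (fun n => picard W D g (n+1) t x) =
        fun n => g x + ∫ s in (0:ℝ)..t, Fop W D (picard W D g n s) x :=
      funext fun n => picard_succ_apply W D g n t x
    rw [h3] at h2
    exact tendsto_nhds_unique h2 (tendsto_const_nhds.add hAn)
  -- Lipschitz continuity of U in time on [-T', T']
  have habsT' : |T'| = T' := abs_of_pos hT'
  have hUB' : ∀ s : ℝ, |s| ≤ T' → ∀ y : ℝ, |U s y| ≤ MB := by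
    intro s hs y
    rw [hMBdef]
    have := hUB s T' (by rwa [habsT']) y
    rwa [habsT'] at this
  have hPB' : ∀ (n : ℕ) (s : ℝ), |s| ≤ T' → ∀ y : ℝ, |picard W D g n s y| ≤ MB := by
    intro n s hs y
    rw [hMBdef]
    have := hPB n s T' (by rwa [habsT']) y
    rwa [habsT'] at this
  have hULip : ∀ t1 t2 x : ℝ, |t1| ≤ T' → |t2| ≤ T' →
      |U t1 x - U t2 x| ≤ CB * |t1 - t2| := by
    intro t1 t2 x h1 h2
    have heq : U t1 x - U t2 x = ∫ s in t2..t1, Fop W D (U s) x := by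
      rw [hIntEq t1 x, hIntEq t2 x]
      rw [← intervalIntegral.integral_interval_sub_left (hintU t1 x) (hintU t2 x)]
      ring
    rw [heq]
    have hptw : ∀ s ∈ Set.uIoc t2 t1, ‖Fop W D (U s) x‖ ≤ CB := by
      intro s hs
      rw [Real.norm_eq_abs]
      have hsle : |s| ≤ T' := (abs_le_max_of_mem_uIoc hs).trans (max_le h2 h1)
      rw [hCBdef]
      exact Fop_bound hD hL hWbd (hUB' s hsle) x
    have hb := intervalIntegral.norm_integral_le_of_norm_le_const hptw
    rwa [Real.norm_eq_abs] at hb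
  -- continuity of t ↦ F(U t)(x) on [-T', T']
  have hFcont : ∀ x : ℝ, ContinuousOn (fun t' => Fop W D (U t') x) (Icc (-T') T') := by
    intro x
    have hlip : LipschitzOnWith (Real.toNNReal (K * CB))
        (fun t' => Fop W D (U t') x) (Icc (-T') T') := by
      apply LipschitzOnWith.of_dist_le_mul
      intro s1 h1 s2 h2
      rw [Real.dist_eq, Real.dist_eq]
      have ha1 : |s1| ≤ T' := abs_le.2 ⟨h1.1, h1.2⟩
      have ha2 : |s2| ≤ T' := abs_le.2 ⟨h2.1, h2.2⟩
      have hi1 : IntervalIntegrable (fun y => W x y * D (U s1 y - U s1 x)) volume 0 1 :=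
        Fop_integrand_integrable hD hL hDc hWmeas hWbd (hUsec s1) (hUB' s1 ha1) x
      have hi2 : IntervalIntegrable (fun y => W x y * D (U s2 y - U s2 x)) volume 0 1 :=
        Fop_integrand_integrable hD hL hDc hWmeas hWbd (hUsec s2) (hUB' s2 ha2) x
      have hdiff := Fop_diff hD hWbd hi1 hi2
        (fun y _ => hULip s1 s2 y ha1 ha2) (hULip s1 s2 x ha1 ha2)
      calc |Fop W D (U s1) x - Fop W D (U s2) x|
          ≤ 2 * L * CW * (CB * |s1 - s2|) := hdiff
        _ = (K * CB) * |s1 - s2| := by rw [hKdef]; ring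
        _ ≤ (Real.toNNReal (K * CB) : ℝ) * |s1 - s2| :=
            mul_le_mul_of_nonneg_right (Real.le_coe_toNNReal _) (abs_nonneg _)
    exact hlip.continuousOn
  -- differentiability
  have hDeriv : ∀ t' ∈ Icc (-T) T, ∀ x : ℝ,
      HasDerivAt (fun s => U s x) (Fop W D (U t') x) t' := by
    intro t' ht' x
    have heq : (fun s => U s x) = fun s => g x + ∫ r in (0:ℝ)..s, Fop W D (U r) x :=
      funext fun s => hIntEq s x
    rw [heq]
    apply HasDerivAt.const_add
    apply intervalIntegral.integral_hasDerivAt_right (hintU t' x)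
      ((hFsec hUmeas x).stronglyMeasurable.stronglyMeasurableAtFilter)
    apply (hFcont x).continuousAt
    obtain ⟨hta, htb⟩ := ht'
    apply Icc_mem_nhds
    · rw [hT'def]; linarith
    · rw [hT'def]; linarith
  -- assemble
  refine ⟨U, ⟨hUmeas, ⟨MB, fun t ht x => hUB' t (abs_le.2 ⟨by rw [hT'def]; linarith [ht.1],
      by rw [hT'def]; linarith [ht.2]⟩) x⟩, hU0, ?_, ?_⟩, ?_⟩
  · -- the derivative
    intro t ht x _
    have h := hDeriv t ht x
    simpa only [Fop_def] using h
  · -- continuity of the derivative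
    intro x _
    have hsub : Icc (-T) T ⊆ Icc (-T') T' := by
      apply Icc_subset_Icc
      · rw [hT'def]; linarith
      · rw [hT'def]; linarith
    have h := (hFcont x).mono hsub
    simpa only [Fop_def] using h
  · -- uniqueness
    rintro v ⟨hvmeas, ⟨Mv, hvbd⟩, hv0, hvderiv, hvcont⟩ t ht x hx
    have hvsec : ∀ s : ℝ, Measurable (v s) :=
      fun s => hvmeas.comp (measurable_const.prodMk measurable_id)
    have hMv : 0 ≤ Mv := (abs_nonneg _).trans (hvbd 0 ⟨by linarith, by linarith⟩ 0)
    have huIcc : ∀ t' ∈ Icc (-T) T, Set.uIcc (0:ℝ) t' ⊆ Icc (-T) T := by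
      intro t' ht'
      exact Set.uIcc_subset_Icc ⟨by linarith, by linarith⟩ ⟨ht'.1, ht'.2⟩
    have hvcontF : ∀ x' ∈ Icc (0:ℝ) 1,
        ContinuousOn (fun s => Fop W D (v s) x') (Icc (-T) T) := by
      intro x' hx'
      have h := hvcont x' hx'
      simpa only [← Fop_def] using h
    have hintV : ∀ t' ∈ Icc (-T) T, ∀ x' ∈ Icc (0:ℝ) 1,
        IntervalIntegrable (fun s => Fop W D (v s) x') volume 0 t' := by
      intro t' ht' x' hx'
      exact ((hvcontF x' hx').mono (huIcc t' ht')).intervalIntegrable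
    have hvint : ∀ t' ∈ Icc (-T) T, ∀ x' ∈ Icc (0:ℝ) 1,
        v t' x' = g x' + ∫ s in (0:ℝ)..t', Fop W D (v s) x' := by
      intro t' ht' x' hx'
      have hder : ∀ s ∈ Set.uIcc (0:ℝ) t',
          HasDerivAt (fun r => v r x') (Fop W D (v s) x') s := by
        intro s hs
        have h := hvderiv s (huIcc t' ht' hs) x' hx'
        simpa only [← Fop_def] using h
      have h := intervalIntegral.integral_eq_sub_of_hasDerivAt hder
        (hintV t' ht' x' hx')
      rw [hv0 x'] at h
      linarith
    set A : ℝ := Mv + MB with hAdef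
    have hA : 0 ≤ A := by rw [hAdef]; linarith
    have hbase : ∀ t' ∈ Icc (-T) T, ∀ x' : ℝ, |v t' x' - U t' x'| ≤ A := by
      intro t' ht' x'
      have h1 := hvbd t' ht' x'
      have h2 : |U t' x'| ≤ MB := hUB' t'
        (abs_le.2 ⟨by rw [hT'def]; linarith [ht'.1], by rw [hT'def]; linarith [ht'.2]⟩) x'
      calc |v t' x' - U t' x'| ≤ |v t' x'| + |U t' x'| := abs_sub _ _
        _ ≤ A := by rw [hAdef]; linarith
    have hest : ∀ n : ℕ, ∀ t' ∈ Icc (-T) T, ∀ x' ∈ Icc (0:ℝ) 1,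
        |v t' x' - U t' x'| ≤ A * K ^ n * |t'| ^ n / (Nat.factorial n) := by
      intro n
      induction n with
      | zero =>
        intro t' ht' x' _
        simpa using hbase t' ht' x'
      | succ n ih =>
        intro t' ht' x' hx'
        have habsT : |t'| ≤ T := abs_le.2 ⟨ht'.1, ht'.2⟩
        have habsT'2 : |t'| ≤ T' := by rw [hT'def]; linarith
        have hsub2 : v t' x' - U t' x' =
            ∫ s in (0:ℝ)..t', (Fop W D (v s) x' - Fop W D (U s) x') := by
          rw [hvint t' ht' x' hx', hIntEq t' x',
            intervalIntegral.integral_sub (hintV t' ht' x' hx') (hintU t' x')]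
          ring
        rw [hsub2]
        have hCnn : 0 ≤ K * (A * K ^ n / (Nat.factorial n)) := by positivity
        have hptw : ∀ᵐ s ∂(volume.restrict (Set.uIoc (0:ℝ) t')),
            ‖Fop W D (v s) x' - Fop W D (U s) x'‖ ≤
              (K * (A * K ^ n / (Nat.factorial n))) * |s| ^ n := by
          refine (ae_restrict_iff' measurableSet_uIoc).2 (ae_of_all _ fun s hs => ?_)
          have hsmem : s ∈ Icc (-T) T := huIcc t' ht' (Set.uIoc_subset_uIcc hs)
          have hsT' : |s| ≤ T' := by
            have := abs_le.2 ⟨hsmem.1, hsmem.2⟩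
            rw [hT'def]; linarith
          rw [Real.norm_eq_abs]
          have hi1 : IntervalIntegrable (fun y => W x' y * D (v s y - v s x')) volume 0 1 :=
            Fop_integrand_integrable hD hL hDc hWmeas hWbd (hvsec s) (hvbd s hsmem) x'
          have hi2 : IntervalIntegrable (fun y => W x' y * D (U s y - U s x')) volume 0 1 :=
            Fop_integrand_integrable hD hL hDc hWmeas hWbd (hUsec s) (hUB' s hsT') x'
          have hdiff := Fop_diff hD hWbd hi1 hi2
            (fun y hy => ih s hsmem y hy) (ih s hsmem x' hx')
          calc |Fop W D (v s) x' - Fop W D (U s) x'|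
              ≤ 2 * L * CW * (A * K ^ n * |s| ^ n / (Nat.factorial n)) := hdiff
            _ = (K * (A * K ^ n / (Nat.factorial n))) * |s| ^ n := by rw [hKdef]; ring
        have hgint : IntervalIntegrable
            (fun s => (K * (A * K ^ n / (Nat.factorial n))) * |s| ^ n) volume 0 t' :=
          Continuous.intervalIntegrable
            (continuous_const.mul ((continuous_abs).pow n)) 0 t'
        have hb := intervalIntegral.norm_integral_le_abs_of_norm_le hptw hgint
        rw [Real.norm_eq_abs] at hb
        refine hb.trans ?_
        rw [abs_integral_const_abs_pow hCnn n t']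
        apply le_of_eq
        rw [Nat.factorial_succ]
        have hf : ((Nat.factorial n : ℝ)) ≠ 0 := Nat.cast_ne_zero.2 (Nat.factorial_ne_zero n)
        have hn1 : ((n:ℝ) + 1) ≠ 0 := by positivity
        push_cast
        field_simp
        ring
    have hTabs : |t| ≤ T := abs_le.2 ⟨ht.1, ht.2⟩
    have hle : ∀ n : ℕ, |v t x - U t x| ≤ A * (K * T) ^ n / (Nat.factorial n) := by
      intro n
      refine (hest n t ht x hx).trans ?_
      have hfpos : (0:ℝ) < (Nat.factorial n : ℝ) := by
        exact_mod_cast Nat.factorial_pos n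
      rw [div_le_div_iff₀ hfpos hfpos]
      have h1 : A * K ^ n * |t| ^ n ≤ A * (K * T) ^ n := by
        have he : (K * T) ^ n = K ^ n * T ^ n := mul_pow K T n
        rw [he, ← mul_assoc]
        exact mul_le_mul_of_nonneg_left (pow_le_pow_left₀ (abs_nonneg t) hTabs n)
          (mul_nonneg hA (pow_nonneg hK n))
      exact mul_le_mul_of_nonneg_right h1 hfpos.le
    have hlim : Filter.Tendsto (fun n => A * (K * T) ^ n / (Nat.factorial n))
        atTop (nhds 0) := by
      have h0 := FloorSemiring.tendsto_pow_div_factorial_atTop (K * T) (K := ℝ)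
      have h1 := h0.const_mul A
      simpa [mul_div_assoc] using h1
    have hfinal : |v t x - U t x| ≤ 0 :=
      ge_of_tendsto hlim (Filter.Eventually.of_forall hle)
    have h0 : v t x - U t x = 0 :=
      abs_eq_zero.1 (le_antisymm hfinal (abs_nonneg _))
    linarith
end

section
/- Let D : ℝ → ℝ be Lipschitz with constant L and W ∈ L^∞([0,1]²). Then the map F : L^∞([0,1]) → L^∞([0,1]) given by F(u)(x) = ∫_0^1 W(x,y) D(u(y) − u(x)) dy is Lipschitz continuous with Lipschitz constant at most 2 L ‖W‖_{L^∞([0,1]²)}. -/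
open MeasureTheory Set

set_option maxHeartbeats 1000000

/-- The nonlocal operator `F(u)(x) = ∫_0^1 W(x,y) D(u(y) − u(x)) dy` is Lipschitz on
`L^∞([0,1])` with constant at most `2 L ‖W‖_{L^∞([0,1]²)}`. -/
theorem nonlocal_operator_lipschitz
    (D : ℝ → ℝ) (L : ℝ) (hL : 0 ≤ L) (hD : ∀ a b : ℝ, |D a - D b| ≤ L * |a - b|)
    (W : ℝ → ℝ → ℝ) (hWmeas : Measurable (Function.uncurry W))
    (hWmem : MemLp (fun p : ℝ × ℝ => W p.1 p.2) ⊤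
      (volume.restrict (Icc 0 1 ×ˢ Icc 0 1)))
    (u v : ℝ → ℝ) (humeas : Measurable u) (hvmeas : Measurable v)
    (hu : MemLp u ⊤ (volume.restrict (Icc (0:ℝ) 1)))
    (hv : MemLp v ⊤ (volume.restrict (Icc (0:ℝ) 1))) :
    eLpNorm (fun x => (∫ y in (0:ℝ)..1, W x y * D (u y - u x)) -
        (∫ y in (0:ℝ)..1, W x y * D (v y - v x))) ⊤ (volume.restrict (Icc (0:ℝ) 1))
      ≤ ENNReal.ofReal (2 * L) *
        eLpNorm (fun p : ℝ × ℝ => W p.1 p.2) ⊤ (volume.restrict (Icc 0 1 ×ˢ Icc 0 1)) *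
        eLpNorm (fun x => u x - v x) ⊤ (volume.restrict (Icc (0:ℝ) 1)) := by
  have hDlip : LipschitzWith (Real.toNNReal L) D := by
    apply LipschitzWith.of_dist_le_mul
    intro a b
    simp only [Real.dist_eq]
    calc |D a - D b| ≤ L * |a - b| := hD a b
      _ ≤ (Real.toNNReal L : ℝ) * |a - b| := by
          gcongr; exact Real.le_coe_toNNReal L
  have hDmeas : Measurable D := hDlip.continuous.measurable
  set μ := volume.restrict (Icc (0:ℝ) 1) with hμ
  set ν := volume.restrict (Icc (0:ℝ) 1 ×ˢ Icc (0:ℝ) 1) with hν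
  set M : ℝ := (eLpNorm (fun p : ℝ × ℝ => W p.1 p.2) ⊤ ν).toReal with hM
  set C : ℝ := (eLpNorm (fun x => u x - v x) ⊤ μ).toReal with hC
  set Ku : ℝ := (eLpNorm u ⊤ μ).toReal with hKu
  set Kv : ℝ := (eLpNorm v ⊤ μ).toReal with hKv
  have huv : MemLp (fun x => u x - v x) ⊤ μ := hu.sub hv
  have hWfin : eLpNorm (fun p : ℝ × ℝ => W p.1 p.2) ⊤ ν ≠ ⊤ := hWmem.2.ne
  have hCfin : eLpNorm (fun x => u x - v x) ⊤ μ ≠ ⊤ := huv.2.ne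
  have hM0 : 0 ≤ M := ENNReal.toReal_nonneg
  have hC0 : 0 ≤ C := ENNReal.toReal_nonneg
  -- a.e. bounds from essential sups
  have aebd : ∀ {g : ℝ → ℝ} (hg : MemLp g ⊤ μ),
      ∀ᵐ y ∂μ, |g y| ≤ (eLpNorm g ⊤ μ).toReal := by
    intro g hg
    filter_upwards [ae_le_eLpNormEssSup (f := g) (μ := μ)] with y hy
    have := ENNReal.toReal_mono (by
      rw [← eLpNorm_exponent_top (f := g)]; exact hg.2.ne) hy
    simpa [Real.norm_eq_abs, eLpNorm_exponent_top] using this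
  have hWbd : ∀ᵐ p ∂ν, |W p.1 p.2| ≤ M := by
    filter_upwards [ae_le_eLpNormEssSup (f := fun p : ℝ × ℝ => W p.1 p.2) (μ := ν)]
      with p hp
    have := ENNReal.toReal_mono (by
      rw [← eLpNorm_exponent_top (f := fun p : ℝ × ℝ => W p.1 p.2)]; exact hWfin) hp
    simpa [Real.norm_eq_abs, eLpNorm_exponent_top, hM] using this
  have hprod : μ.prod μ = ν := by
    rw [hμ, hν, Measure.prod_restrict, ← Measure.volume_eq_prod]
  have hW2 : ∀ᵐ x ∂μ, ∀ᵐ y ∂μ, |W x y| ≤ M :=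
    Measure.ae_ae_of_ae_prod (by rw [hprod]; exact hWbd)
  have huvC : ∀ᵐ y ∂μ, |u y - v y| ≤ C := aebd huv
  have hubd : ∀ᵐ y ∂μ, |u y| ≤ Ku := aebd hu
  have hvbd : ∀ᵐ y ∂μ, |v y| ≤ Kv := aebd hv
  -- transfer to Ioc for integration
  have hsub : Ioc (0:ℝ) 1 ⊆ Icc 0 1 := Ioc_subset_Icc_self
  have hmeasIoc : MeasurableSet (Ioc (0:ℝ) 1) := measurableSet_Ioc
  haveI : IsFiniteMeasure (volume.restrict (Ioc (0:ℝ) 1)) :=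
    ⟨by simp [Measure.restrict_apply_univ, Real.volume_Ioc]⟩
  have toIoc : ∀ {P : ℝ → Prop}, (∀ᵐ y ∂μ, P y) →
      ∀ᵐ y ∂(volume.restrict (Ioc (0:ℝ) 1)), P y := fun h =>
    ae_restrict_of_ae_restrict_of_subset hsub h
  -- main pointwise bound
  have key : ∀ᵐ x ∂μ, ‖(∫ y in (0:ℝ)..1, W x y * D (u y - u x)) -
      (∫ y in (0:ℝ)..1, W x y * D (v y - v x))‖ ≤ 2 * L * M * C := by
    filter_upwards [hW2, huvC, hubd, hvbd] with x hWx huvx hux hvx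
    have hWx' := toIoc hWx
    have huvC' := toIoc huvC
    have hubd' := toIoc hubd
    have hvbd' := toIoc hvbd
    -- integrability of both integrands on Ioc 0 1
    have hint : ∀ (w : ℝ → ℝ) (hw : Measurable w) (Kw : ℝ)
        (hwbd : ∀ᵐ y ∂(volume.restrict (Ioc (0:ℝ) 1)), |w y| ≤ Kw),
        Integrable (fun y => W x y * D (w y - w x))
          (volume.restrict (Ioc (0:ℝ) 1)) := by
      intro w hw Kw hwbd
      refine ⟨((hWmeas.of_uncurry_left).mul
        (hDmeas.comp (hw.sub measurable_const))).aestronglyMeasurable, ?_⟩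
      apply HasFiniteIntegral.of_bounded
        (C := M * (|D 0| + L * (Kw + |w x|)))
      filter_upwards [hWx', hwbd] with y hWy hwy
      have hD0 : |D (w y - w x)| ≤ |D 0| + L * |w y - w x| := by
        have := hD (w y - w x) 0
        calc |D (w y - w x)| = |D 0 + (D (w y - w x) - D 0)| := by ring_nf
          _ ≤ |D 0| + |D (w y - w x) - D 0| := abs_add_le _ _
          _ ≤ |D 0| + L * |w y - w x| := by simpa using this
      have h1 : |w y - w x| ≤ Kw + |w x| := by
        calc |w y - w x| ≤ |w y| + |w x| := abs_sub _ _
          _ ≤ Kw + |w x| := by gcongr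
      have hWy0 : (0:ℝ) ≤ |W x y| := abs_nonneg _
      simp only [Real.norm_eq_abs, abs_mul]
      have hD1 : |D (w y - w x)| ≤ |D 0| + L * (Kw + |w x|) := by
        calc |D (w y - w x)| ≤ |D 0| + L * |w y - w x| := hD0
          _ ≤ |D 0| + L * (Kw + |w x|) := by gcongr
      exact mul_le_mul hWy hD1 (abs_nonneg _) hM0
    have hintu := hint u humeas Ku hubd'
    have hintv := hint v hvmeas Kv hvbd'
    have h01 : (0:ℝ) ≤ 1 := by norm_num
    rw [intervalIntegral.integral_of_le h01, intervalIntegral.integral_of_le h01,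
      ← integral_sub hintu hintv]
    have hbound : ∀ᵐ y ∂(volume.restrict (Ioc (0:ℝ) 1)),
        ‖W x y * D (u y - u x) - W x y * D (v y - v x)‖ ≤ 2 * L * M * C := by
      filter_upwards [hWx', huvC'] with y hWy huvy
      have : W x y * D (u y - u x) - W x y * D (v y - v x)
          = W x y * (D (u y - u x) - D (v y - v x)) := by ring
      rw [this, Real.norm_eq_abs, abs_mul]
      have hDdiff : |D (u y - u x) - D (v y - v x)| ≤ L * (2 * C) := by
        calc |D (u y - u x) - D (v y - v x)|
            ≤ L * |(u y - u x) - (v y - v x)| := hD _ _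
          _ = L * |(u y - v y) - (u x - v x)| := by ring_nf
          _ ≤ L * (|u y - v y| + |u x - v x|) := by
              gcongr; exact abs_sub _ _
          _ ≤ L * (C + C) := by gcongr
          _ = L * (2 * C) := by ring
      calc |W x y| * |D (u y - u x) - D (v y - v x)|
          ≤ M * (L * (2 * C)) :=
            mul_le_mul hWy hDdiff (abs_nonneg _) hM0
        _ = 2 * L * M * C := by ring
    calc ‖∫ y in Ioc (0:ℝ) 1, (W x y * D (u y - u x) - W x y * D (v y - v x))‖
        ≤ 2 * L * M * C * ((volume.restrict (Ioc (0:ℝ) 1)) univ).toReal :=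
          norm_integral_le_of_norm_le_const hbound
      _ = 2 * L * M * C := by
          simp [Measure.restrict_apply_univ, Real.volume_Ioc]
  -- conclude
  have hfinal : eLpNorm (fun x => (∫ y in (0:ℝ)..1, W x y * D (u y - u x)) -
      (∫ y in (0:ℝ)..1, W x y * D (v y - v x))) ⊤ μ
      ≤ ENNReal.ofReal (2 * L * M * C) := by
    rw [eLpNorm_exponent_top]
    exact eLpNormEssSup_le_of_ae_bound key
  refine hfinal.trans ?_
  rw [show (2 * L * M * C) = (2 * L) * M * C by ring,
    ENNReal.ofReal_mul (by positivity), ENNReal.ofReal_mul (by positivity),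
    ENNReal.ofReal_toReal hWfin, ENNReal.ofReal_toReal hCfin]
end
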